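/- arXiv:1804.08648 — 3 statements merged into one kernel-verified Lean document; each statement's English description precedes it below -/
import Mathlib

section
/- Under the structural assumption E'(u) v = ⟪Q(u) u, v⟫ with A dissipative, i.e., ⟪A(w), w⟫ ≤ 0 for all w, every differentiable solution u of Q(u(t))* u'(t) = A(u(t)) has nonincreasing energy: t ↦ E(u(t)) is monotone nonincreasing. -/
open scoped RealInnerProductSpace

/-- Energy decay: with `E'(u) v = ⟪Q(u) u, v⟫` and `A` dissipative (`⟪A w, w⟫ ≤ 0`),
every differentiable solution of `Q(u)* ∂ₜu = A(u)` on `t ≥ 0` has nonincreasing energy. -/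
theorem energy_nonincreasing
    {H : Type*} [NormedAddCommGroup H] [InnerProductSpace ℝ H] [CompleteSpace H]
    (E : H → ℝ) (hE : Differentiable ℝ E)
    (Q : H → (H →L[ℝ] H))
    (hQ : ∀ u v : H, fderiv ℝ E u v = ⟪Q u u, v⟫)
    (A : H → H) (hA : ∀ w : H, ⟪A w, w⟫ ≤ 0)
    (u : ℝ → H) (hu : Differentiable ℝ u)
    (heq : ∀ t : ℝ, 0 ≤ t → ContinuousLinearMap.adjoint (Q (u t)) (deriv u t) = A (u t)) :
    AntitoneOn (fun t => E (u t)) (Set.Ici (0 : ℝ)) := by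
  have hdiff : Differentiable ℝ (fun t => E (u t)) := hE.comp hu
  apply antitoneOn_of_deriv_nonpos (convex_Ici 0) hdiff.continuous.continuousOn
    (hdiff.differentiableOn)
  intro t ht
  rw [interior_Ici] at ht
  have ht' : (0:ℝ) ≤ t := le_of_lt ht
  have h1 : deriv (fun t => E (u t)) t = fderiv ℝ E (u t) (deriv u t) := by
    have := fderiv_comp t (hE (u t)) (hu t)
    have h2 : deriv (fun t => E (u t)) t = fderiv ℝ (E ∘ u) t 1 := by
      rw [fderiv_apply_one_eq_deriv]; rfl
    rw [h2, this]
    rfl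
  rw [h1, hQ]
  have : ⟪Q (u t) (u t), deriv u t⟫ = ⟪u t, ContinuousLinearMap.adjoint (Q (u t)) (deriv u t)⟫ := by
    rw [ContinuousLinearMap.adjoint_inner_right]
  rw [this, heq t ht', real_inner_comm]
  exact hA (u t)
end

section
/- Let Vₕ be a subspace of H and suppose uₕ : ℝ → Vₕ is differentiable and satisfies the Galerkin equations ⟪Q(uₕ(t))* uₕ'(t), vₕ⟫ = ⟪A(uₕ(t)), vₕ⟫ for all vₕ ∈ Vₕ. Then the same dissipation identity holds for the semi-discrete solution: d/dt E(uₕ(t)) = ⟪A(uₕ(t)), uₕ(t)⟫. -/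
open scoped RealInnerProductSpace

/-- Galerkin semi-discretization (Theorem 2): if `uₕ(t)` stays in the subspace `Vₕ` and
satisfies the Galerkin equations tested against all `vₕ ∈ Vₕ`, the dissipation identity
is inherited. -/
theorem galerkin_dissipation_identity
    {H : Type*} [NormedAddCommGroup H] [InnerProductSpace ℝ H] [CompleteSpace H]
    (Vh : Submodule ℝ H) (hVh : IsClosed (Vh : Set H))
    (E : H → ℝ) (hE : Differentiable ℝ E)
    (Q : H → (H →L[ℝ] H))
    (hQ : ∀ u v : H, fderiv ℝ E u v = ⟪Q u u, v⟫)
    (A : H → H)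
    (uh : ℝ → H) (huh : Differentiable ℝ uh)
    (hmem : ∀ t : ℝ, uh t ∈ Vh)
    (heq : ∀ t : ℝ, ∀ vh ∈ Vh,
      ⟪ContinuousLinearMap.adjoint (Q (uh t)) (deriv uh t), vh⟫ = ⟪A (uh t), vh⟫) :
    ∀ t : ℝ, deriv (fun s => E (uh s)) t = ⟪A (uh t), uh t⟫ := by
  intro t
  have hchain : deriv (fun s => E (uh s)) t = fderiv ℝ E (uh t) (deriv uh t) := by
    exact ((hE (uh t)).hasFDerivAt.comp_hasDerivAt t (huh t).hasDerivAt).deriv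
  rw [hchain, hQ]
  have hadj : ⟪ContinuousLinearMap.adjoint (Q (uh t)) (deriv uh t), uh t⟫
      = ⟪Q (uh t) (uh t), deriv uh t⟫ := by
    rw [ContinuousLinearMap.adjoint_inner_left, real_inner_comm]
  rw [← hadj, heq t (uh t) (hmem t)]
end

section
/- (Implicit Euler dissipation inequality.) Suppose E : H → ℝ is convex differentiable with E'(u) v = ⟪Q(u) u, v⟫ and ⟪A(w), w⟫ = -D(w) with D(w) ≥ 0. If the sequence (uⁿ) satisfies the implicit Euler scheme ⟪Q(uⁿ)* (uⁿ - uⁿ⁻¹)/τ, v⟫ = ⟪A(uⁿ), v⟫ for all v ∈ H with step size τ > 0, then E(uⁿ) + τ D(uⁿ) ≤ E(uⁿ⁻¹) for every n ≥ 1; in particular E(uⁿ) ≤ E(u⁰) for all n. -/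
open scoped RealInnerProductSpace

/-- Gradient inequality for convex differentiable functions. -/
lemma convex_grad_ineq {H : Type*} [NormedAddCommGroup H] [NormedSpace ℝ H]
    (E : H → ℝ) (hE : Differentiable ℝ E) (hconv : ConvexOn ℝ Set.univ E)
    (x y : H) : E x - E y ≤ fderiv ℝ E x (x - y) := by
  set h : ℝ →ᵃ[ℝ] H := AffineMap.lineMap y x with hh
  have hline : ∀ t : ℝ, h t = y + t • (x - y) := by
    intro t; simp [hh, AffineMap.lineMap_apply, smul_sub]; abel
  have hgconv : ConvexOn ℝ Set.univ (E ∘ h) := by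
    have := hconv.comp_affineMap h
    simpa using this
  have hderivh : HasDerivAt (fun t : ℝ => h t) (x - y) 1 := by
    have : HasDerivAt (fun t : ℝ => y + t • (x - y)) (x - y) 1 := by
      simpa using ((hasDerivAt_id (1:ℝ)).smul_const (x - y)).const_add y
    simpa only [hline] using this
  have hg1 : HasDerivAt (E ∘ h) (fderiv ℝ E (h 1) (x - y)) 1 :=
    (hE (h 1)).hasFDerivAt.comp_hasDerivAt 1 hderivh
  have hslope := hgconv.slope_le_of_hasDerivAt (Set.mem_univ (0:ℝ))
      (Set.mem_univ (1:ℝ)) one_pos hg1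
  have hs : slope (E ∘ h) 0 1 = E x - E y := by
    simp [slope, hline]
  have h1 : h 1 = x := by simp [hline]
  rw [hs, h1] at hslope
  exact hslope

/-- Implicit Euler dissipation inequality: for the scheme
`Q(uⁿ)* ((uⁿ - uⁿ⁻¹)/τ) = A(uⁿ)` one has `E(uⁿ) + τ D(uⁿ) ≤ E(uⁿ⁻¹)` with
`D(w) = -⟪A w, w⟫ ≥ 0`, and in particular `E(uⁿ) ≤ E(u⁰)`. -/
theorem implicit_euler_dissipation
    {H : Type*} [NormedAddCommGroup H] [InnerProductSpace ℝ H] [CompleteSpace H]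
    (E : H → ℝ) (hE : Differentiable ℝ E)
    (hconv : ConvexOn ℝ Set.univ E)
    (Q : H → (H →L[ℝ] H))
    (hQ : ∀ u v : H, fderiv ℝ E u v = ⟪Q u u, v⟫)
    (A : H → H) (hA : ∀ w : H, 0 ≤ -⟪A w, w⟫)
    (τ : ℝ) (hτ : 0 < τ)
    (u : ℕ → H)
    (hscheme : ∀ n : ℕ, 1 ≤ n →
      ContinuousLinearMap.adjoint (Q (u n)) (τ⁻¹ • (u n - u (n - 1))) = A (u n)) :
    (∀ n : ℕ, 1 ≤ n → E (u n) + τ * (-⟪A (u n), u n⟫) ≤ E (u (n - 1))) ∧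
      (∀ n : ℕ, E (u n) ≤ E (u 0)) := by
  have key : ∀ n : ℕ, 1 ≤ n → E (u n) + τ * (-⟪A (u n), u n⟫) ≤ E (u (n - 1)) := by
    intro n hn
    have hgrad := convex_grad_ineq E hE hconv (u n) (u (n - 1))
    rw [hQ] at hgrad
    have hid : ⟪Q (u n) (u n), u n - u (n - 1)⟫ = -(τ * (-⟪A (u n), u n⟫)) := by
      have h1 : ⟪Q (u n) (u n), u n - u (n - 1)⟫
          = ⟪ContinuousLinearMap.adjoint (Q (u n)) (u n - u (n - 1)), u n⟫ := by
        rw [ContinuousLinearMap.adjoint_inner_left, real_inner_comm]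
      have h2 : u n - u (n - 1) = τ • (τ⁻¹ • (u n - u (n - 1))) := by
        rw [smul_smul, mul_inv_cancel₀ hτ.ne', one_smul]
      rw [h1, h2, map_smul, inner_smul_left, hscheme n hn]
      ring_nf
      simp [real_inner_comm]
      ring
    rw [hid] at hgrad
    linarith
  refine ⟨key, ?_⟩
  intro n
  induction n with
  | zero => exact le_refl _
  | succ m ih =>
      have h1 := key (m + 1) (Nat.le_add_left 1 m)
      have h2 := hA (u (m + 1))
      have : E (u (m + 1)) ≤ E (u m) := by
        have : E (u (m + 1)) ≤ E (u (m + 1 - 1)) := by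
          nlinarith [mul_nonneg hτ.le h2]
        simpa using this
      linarith
end
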